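/- (Projection of a separating hyperplane, deterministic core) Let b, a_1, …, a_n ∈ ℝ^m be vectors of Euclidean norm 1, let ε > 0, and let c ∈ ℝ^m with ‖c‖ = 1 be such that ⟨c, b⟩ < −ε and ⟨c, a_i⟩ ≥ ε for all 1 ≤ i ≤ n. Let T : ℝ^m → ℝ^k be a linear map such that for every x ∈ {b, a_1, …, a_n}, both (1−ε)·‖c−x‖² ≤ ‖T(c−x)‖² ≤ (1+ε)·‖c−x‖² and (1−ε)·‖c+x‖² ≤ ‖T(c+x)‖² ≤ (1+ε)·‖c+x‖² hold. Then ⟨T(c), T(b)⟩ < 0 and ⟨T(c), T(a_i)⟩ ≥ 0 for all 1 ≤ i ≤ n; in particular, T(b) ∉ cone{T(a_1), …, T(a_n)}. -/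
import Mathlib


open RealInnerProductSpace

/-- The cone generated by vectors `v_1, …, v_n`: all non-negative linear combinations. -/
def coneOf {E : Type*} [AddCommMonoid E] [Module ℝ E] {n : ℕ} (v : Fin n → E) : Set E :=
  {x | ∃ lam : Fin n → ℝ, (∀ i, 0 ≤ lam i) ∧ x = ∑ i, lam i • v i}

/-- **Projection of a separating hyperplane, deterministic core.**
If `b, a_1, …, a_n, c ∈ ℝ^m` are unit vectors with `⟪c, b⟫ < -ε` and `⟪c, a_i⟫ ≥ ε`, and
`T` is a linear map preserving (up to factor `1 ± ε`) the squared norms of `c - x` and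
`c + x` for every `x ∈ {b, a_1, …, a_n}`, then `⟪T c, T b⟫ < 0` and `⟪T c, T (a i)⟫ ≥ 0`
for all `i`; in particular `T b ∉ cone {T (a_1), …, T (a_n)}`. -/
theorem separating_hyperplane_deterministic {m k n : ℕ}
    (b c : EuclideanSpace ℝ (Fin m)) (a : Fin n → EuclideanSpace ℝ (Fin m))
    (hb : ‖b‖ = 1) (ha : ∀ i, ‖a i‖ = 1) (hc : ‖c‖ = 1)
    (ε : ℝ) (hε : 0 < ε)
    (hcb : ⟪c, b⟫ < -ε) (hca : ∀ i, ε ≤ ⟪c, a i⟫)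
    (T : EuclideanSpace ℝ (Fin m) →ₗ[ℝ] EuclideanSpace ℝ (Fin k))
    (hT : ∀ x ∈ insert b (Set.range a),
      ((1 - ε) * ‖c - x‖ ^ 2 ≤ ‖T (c - x)‖ ^ 2 ∧ ‖T (c - x)‖ ^ 2 ≤ (1 + ε) * ‖c - x‖ ^ 2) ∧
      ((1 - ε) * ‖c + x‖ ^ 2 ≤ ‖T (c + x)‖ ^ 2 ∧ ‖T (c + x)‖ ^ 2 ≤ (1 + ε) * ‖c + x‖ ^ 2)) :
    (⟪T c, T b⟫ < 0 ∧ ∀ i, 0 ≤ ⟪T c, T (a i)⟫) ∧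
      T b ∉ coneOf (fun i => T (a i)) := by

  have key : ∀ x ∈ insert b (Set.range a), ‖x‖ = 1 →
      ⟪c, x⟫ - ε ≤ ⟪T c, T x⟫ ∧ ⟪T c, T x⟫ ≤ ⟪c, x⟫ + ε := by
    intro x hx hx1
    obtain ⟨⟨h1, h2⟩, ⟨h3, h4⟩⟩ := hT x hx
    have hsub : ‖c - x‖ ^ 2 = 2 - 2 * ⟪c, x⟫ := by
      rw [norm_sub_sq_real, hc, hx1]; ring
    have hadd : ‖c + x‖ ^ 2 = 2 + 2 * ⟪c, x⟫ := by
      rw [norm_add_sq_real, hc, hx1]; ring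
    have hTsub : ‖T (c - x)‖ ^ 2 = ‖T c‖ ^ 2 - 2 * ⟪T c, T x⟫ + ‖T x‖ ^ 2 := by
      rw [map_sub, norm_sub_sq_real]
    have hTadd : ‖T (c + x)‖ ^ 2 = ‖T c‖ ^ 2 + 2 * ⟪T c, T x⟫ + ‖T x‖ ^ 2 := by
      rw [map_add, norm_add_sq_real]
    rw [hsub] at h1 h2
    rw [hadd] at h3 h4
    rw [hTsub] at h1 h2
    rw [hTadd] at h3 h4
    constructor <;> nlinarith
  have hbmem : b ∈ insert b (Set.range a) := Set.mem_insert _ _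
  have hbkey := key b hbmem hb
  have hltb : ⟪T c, T b⟫ < 0 := lt_of_le_of_lt hbkey.2 (by linarith)
  have hai : ∀ i, 0 ≤ ⟪T c, T (a i)⟫ := by
    intro i
    have := (key (a i) (Set.mem_insert_of_mem _ ⟨i, rfl⟩) (ha i)).1
    linarith [hca i]
  refine ⟨⟨hltb, hai⟩, ?_⟩
  rintro ⟨lam, hlam, heq⟩
  have : 0 ≤ ⟪T c, T b⟫ := by
    rw [heq, inner_sum]
    apply Finset.sum_nonneg
    intro i _
    rw [real_inner_smul_right]
    exact mul_nonneg (hlam i) (hai i)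
  linarith
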